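/- Let (T, s) be a signed triangulation of a convex polygon with associated proper 4-colouring of the vertices. For any vertex x of the polygon, the weight p(x) equals 0 (mod 3) if and only if the two neighbours of x along the polygon boundary have the same colour. -/

import Mathlib

namespace PolyFlip


/-- Two vertices of the convex `N`-gon are consecutive along the boundary. -/
def BdryAdj (N : ℕ) (i j : Fin N) : Prop :=
  (i.val + 1) % N = j.val ∨ (j.val + 1) % N = i.val

/-- `d` is a diagonal of the convex `N`-gon: an unordered pair of distinct,
non-consecutive vertices. -/
def IsDiag (N : ℕ) (d : Finset (Fin N)) : Prop :=
  ∃ i j : Fin N, i ≠ j ∧ ¬ BdryAdj N i j ∧ d = {i, j}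

/-- The chord `d` crosses the chord `e` (in this orientation): the endpoints
interlace in the cyclic (here: linear) order of the polygon's vertices. -/
def Crosses {N : ℕ} (d e : Finset (Fin N)) : Prop :=
  ∃ a b c f : Fin N, d = {a, b} ∧ e = {c, f} ∧ a < c ∧ c < b ∧ b < f

/-- A triangulation of the convex `N`-gon: a maximal set of pairwise
non-crossing diagonals. -/
structure Triangulation (N : ℕ) where
  diags : Finset (Finset (Fin N))
  isDiag : ∀ d ∈ diags, IsDiag N d
  noncross : ∀ d ∈ diags, ∀ e ∈ diags, ¬ Crosses d e
  maximal : ∀ d, IsDiag N d → (∀ e ∈ diags, ¬ Crosses d e ∧ ¬ Crosses e d) → d ∈ diags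

/-- `a` and `b` are joined by an edge of the triangulated polygon:
either a boundary edge, or a diagonal of the triangulation. -/
def IsEdge {N : ℕ} (T : Triangulation N) (a b : Fin N) : Prop :=
  a ≠ b ∧ (BdryAdj N a b ∨ ({a, b} : Finset (Fin N)) ∈ T.diags)

/-- `t` is a triangle (face) of the triangulation `T`. -/
def IsTriangle {N : ℕ} (T : Triangulation N) (t : Finset (Fin N)) : Prop :=
  ∃ a b c : Fin N, a ≠ b ∧ a ≠ c ∧ b ≠ c ∧ t = {a, b, c} ∧
    IsEdge T a b ∧ IsEdge T a c ∧ IsEdge T b c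

/-- A coloured triangulation: a triangulation together with a colour in
`Fin m` for each of its triangles. -/
structure ColouredTri (N m : ℕ) where
  T : Triangulation N
  col : {t : Finset (Fin N) // IsTriangle T t} → Fin m

/-- The degree of a vertex `x` in the triangulated polygon. -/
noncomputable def degree {N : ℕ} (T : Triangulation N) (x : Fin N) : ℕ :=
  Nat.card {y : Fin N // IsEdge T x y}

/-- The `σ`-flip at the diagonal `d`: `d = {a,b}` is a diagonal of `C` whose two
incident triangles `{a,b,x}` and `{a,b,y}` have the same colour `i`; it is replaced by
the other diagonal `{x,y}` of the quadrilateral, the two new triangles `{a,x,y}` and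
`{b,x,y}` get colour `σ i`, and all other triangles keep their colours. -/
def SFlipAt {N m : ℕ} (σ : Equiv.Perm (Fin m)) (d : Finset (Fin N))
    (C C' : ColouredTri N m) : Prop :=
  ∃ (a b x y : Fin N) (h₁ : IsTriangle C.T {a, b, x}) (h₂ : IsTriangle C.T {a, b, y})
    (h₁' : IsTriangle C'.T {a, x, y}) (h₂' : IsTriangle C'.T {b, x, y}),
    d = {a, b} ∧ d ∈ C.T.diags ∧ x ≠ y ∧
    C.col ⟨{a, b, x}, h₁⟩ = C.col ⟨{a, b, y}, h₂⟩ ∧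
    C'.T.diags = insert {x, y} (C.T.diags.erase d) ∧
    C'.col ⟨{a, x, y}, h₁'⟩ = σ (C.col ⟨{a, b, x}, h₁⟩) ∧
    C'.col ⟨{b, x, y}, h₂'⟩ = σ (C.col ⟨{a, b, x}, h₁⟩) ∧
    ∀ (t : Finset (Fin N)) (ht : IsTriangle C.T t) (ht' : IsTriangle C'.T t),
      t ≠ {a, b, x} → t ≠ {a, b, y} → C'.col ⟨t, ht'⟩ = C.col ⟨t, ht⟩

/-- The `σ`-flip relation. -/
def SFlip {N m : ℕ} (σ : Equiv.Perm (Fin m)) (C C' : ColouredTri N m) : Prop :=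
  ∃ d, SFlipAt σ d C C'

/-- The 2-coloured flip at a diagonal (the colour permutation swaps the two colours). -/
abbrev Flip2At {N : ℕ} (d : Finset (Fin N)) (C C' : ColouredTri N 2) : Prop :=
  SFlipAt (finRotate 2) d C C'

/-- The 2-coloured flip relation. -/
abbrev Flip2 {N : ℕ} (C C' : ColouredTri N 2) : Prop :=
  SFlip (finRotate 2) C C'

/-- The 2-coloured flip graph of the convex `N`-gon: vertices are the 2-coloured
triangulations, edges are single 2-coloured flips. -/
def flipGraph (N : ℕ) : SimpleGraph (ColouredTri N 2) where
  Adj C C' := C ≠ C' ∧ (Flip2 C C' ∨ Flip2 C' C)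
  symm := ⟨fun C C' h => ⟨h.1.symm, h.2.symm⟩⟩
  loopless := ⟨fun C h => h.1 rfl⟩

/-- The sign (`+1` for colour `0`, `-1` for colour `1`) of a colour, in `ZMod 3`. -/
def signVal (c : Fin 2) : ZMod 3 := if c = 0 then 1 else -1

/-- The weight of a vertex `x`: the sum, modulo 3, of the signs of all triangles
incident with `x`. -/
noncomputable def weight {N : ℕ} (C : ColouredTri N 2) (x : Fin N) : ZMod 3 :=
  ∑ᶠ t : {t : Finset (Fin N) // IsTriangle C.T t},
    if x ∈ t.val then signVal (C.col t) else 0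

/-- The number of triangles coloured `+1` (colour `0`). -/
noncomputable def plusCount {N : ℕ} (C : ColouredTri N 2) : ℕ :=
  Nat.card {t : {t : Finset (Fin N) // IsTriangle C.T t} // C.col t = 0}

/-- Adjacency in the `k`-dimensional hypercube: the two vertices differ in
exactly one coordinate. -/
def cubeAdj (k : ℕ) (u v : Fin k → Bool) : Prop := ∃! i, u i ≠ v i

/-- The `k`-dimensional hypercube graph on `{0,1}^k`. -/
def cubeGraph (k : ℕ) : SimpleGraph (Fin k → Bool) where
  Adj := cubeAdj k
  symm := ⟨by
    rintro u v ⟨i, hi, hu⟩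
    exact ⟨i, hi.symm, fun j hj => hu j hj.symm⟩⟩
  loopless := ⟨by
    rintro u ⟨i, hi, -⟩
    exact hi rfl⟩

/-- `f` exhibits a `k`-dimensional hypercube inside the connected component of `C`
in the 2-coloured flip graph. -/
def CubeEmb {N : ℕ} (C : ColouredTri N 2) (k : ℕ)
    (f : (Fin k → Bool) → ColouredTri N 2) : Prop :=
  Function.Injective f ∧
  (∀ u v, cubeAdj k u v → (flipGraph N).Adj (f u) (f v)) ∧
  ∀ u, (flipGraph N).Reachable C (f u)

/-- `G` contains a subdivision (topological copy) of `H`: there are branch vertices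
`f w` for the vertices `w` of `H` and internally disjoint paths in `G` between them
realising the edges of `H`. -/
def ContainsSubdivision {V W : Type*} (G : SimpleGraph V) (H : SimpleGraph W) : Prop :=
  ∃ f : W → V, Function.Injective f ∧
    ∃ P : ∀ u v : W, H.Adj u v → G.Walk (f u) (f v),
      (∀ u v (h : H.Adj u v), (P u v h).IsPath) ∧
      (∀ u v (h : H.Adj u v) (w : W), f w ∈ (P u v h).support → w = u ∨ w = v) ∧
      (∀ u₁ v₁ (h₁ : H.Adj u₁ v₁) u₂ v₂ (h₂ : H.Adj u₂ v₂),
        (s(u₁, v₁) : Sym2 W) ≠ s(u₂, v₂) →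
        ∀ x, x ∈ (P u₁ v₁ h₁).support → x ∈ (P u₂ v₂ h₂).support →
          (x = f u₁ ∨ x = f v₁) ∧ (x = f u₂ ∨ x = f v₂))

/-- Planarity, via Kuratowski's characterisation: a graph is planar iff it contains
no subdivision of `K₅` and no subdivision of `K₃,₃`. -/
def IsPlanar {V : Type*} (G : SimpleGraph V) : Prop :=
  ¬ ContainsSubdivision G (SimpleGraph.completeGraph (Fin 5)) ∧
  ¬ ContainsSubdivision G (completeBipartiteGraph (Fin 3) (Fin 3))

/-- `col` is a proper 4-colouring of the vertices associated to the signed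
triangulation `C`: adjacent vertices get distinct colours, and in every
quadrilateral formed by two triangles sharing a diagonal, the two vertices not on
the diagonal have equal colours iff the two triangles have different signs. -/
def Compatible {N : ℕ} (C : ColouredTri N 2) (col : Fin N → Fin 4) : Prop :=
  (∀ a b : Fin N, IsEdge C.T a b → col a ≠ col b) ∧
  ∀ (a b x z : Fin N) (h₁ : IsTriangle C.T {a, b, x}) (h₂ : IsTriangle C.T {a, b, z}),
    x ≠ z → ({a, b} : Finset (Fin N)) ∈ C.T.diags →
    (col x = col z ↔ C.col ⟨{a, b, x}, h₁⟩ ≠ C.col ⟨{a, b, z}, h₂⟩)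

section Aux
open Finset

variable {N : ℕ}

lemma pair_eq' {α : Type*} [DecidableEq α] {a b c d : α} (h : ({a,b} : Finset α) = {c,d}) :
    (a = c ∧ b = d) ∨ (a = d ∧ b = c) := by
  have ha : a = c ∨ a = d := by
    have : a ∈ ({c,d} : Finset α) := by rw [← h]; simp
    simpa using this
  have hb : b = c ∨ b = d := by
    have : b ∈ ({c,d} : Finset α) := by rw [← h]; simp
    simpa using this
  have hc : c = a ∨ c = b := by
    have : c ∈ ({a,b} : Finset α) := by rw [h]; simp
    simpa using this
  have hd : d = a ∨ d = b := by
    have : d ∈ ({a,b} : Finset α) := by rw [h]; simp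
    simpa using this
  rcases ha with rfl | rfl <;> rcases hb with rfl | rfl <;> tauto

/-- Symmetrised crossing relation. -/
def X {N : ℕ} (d e : Finset (Fin N)) : Prop := Crosses d e ∨ Crosses e d

lemma X_symm {d e : Finset (Fin N)} (h : X d e) : X e d := h.symm

/-- strictly between, in the linear order, in either orientation of the chord -/
def btw (a b u : Fin N) : Prop :=
  (a.val < u.val ∧ u.val < b.val) ∨ (b.val < u.val ∧ u.val < a.val)

lemma crosses_of {a b c f : Fin N} (h1 : a < c) (h2 : c < b) (h3 : b < f) :
    Crosses {a,b} {c,f} := ⟨a, b, c, f, rfl, rfl, h1, h2, h3⟩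

lemma X_pairs {d e : Finset (Fin N)} (h : X d e) :
    ∃ a b c f : Fin N, d = {a,b} ∧ e = {c,f} ∧ a ≠ b ∧ a ≠ c ∧ a ≠ f ∧ b ≠ c ∧ b ≠ f ∧ c ≠ f := by
  rcases h with ⟨a,b,c,f,hd,he,h1,h2,h3⟩ | ⟨a,b,c,f,he,hd,h1,h2,h3⟩
  · exact ⟨a,b,c,f,hd,he, by fin_omega, by fin_omega, by fin_omega, by fin_omega, by fin_omega, by fin_omega⟩
  · exact ⟨c,f,a,b,hd,he, by fin_omega, by fin_omega, by fin_omega, by fin_omega, by fin_omega, by fin_omega⟩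

lemma X_iff {a b c f : Fin N} (dab : a ≠ b) (dac : a ≠ c) (daf : a ≠ f)
    (dbc : b ≠ c) (dbf : b ≠ f) (dcf : c ≠ f) :
    X {a,b} {c,f} ↔ (btw a b c ↔ ¬ btw a b f) := by
  constructor
  · rintro (⟨p,q,r,s,hd,he,h1,h2,h3⟩ | ⟨p,q,r,s,he,hd,h1,h2,h3⟩) <;>
    · rcases pair_eq' hd with ⟨rfl, rfl⟩ | ⟨rfl, rfl⟩ <;>
        rcases pair_eq' he with ⟨rfl, rfl⟩ | ⟨rfl, rfl⟩ <;>
        simp only [btw] <;> fin_omega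
  · intro h
    have hav := a.isLt
    have hbv := b.isLt
    have hcv := c.isLt
    have hfv := f.isLt
    have dab' : a.val ≠ b.val := fun hh => dab (Fin.ext hh)
    have dac' : a.val ≠ c.val := fun hh => dac (Fin.ext hh)
    have daf' : a.val ≠ f.val := fun hh => daf (Fin.ext hh)
    have dbc' : b.val ≠ c.val := fun hh => dbc (Fin.ext hh)
    have dbf' : b.val ≠ f.val := fun hh => dbf (Fin.ext hh)
    have dcf' : c.val ≠ f.val := fun hh => dcf (Fin.ext hh)
    simp only [btw] at h
    -- case analysis on the four possible interleaving patterns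
    rcases Nat.lt_or_ge a.val b.val with hab | hab
    · rcases Nat.lt_or_ge c.val f.val with hcf | hcf
      · -- a<b, c<f : either a<c<b<f or c<a<f<b
        rcases Nat.lt_or_ge a.val c.val with h1 | h1
        · exact Or.inl (crosses_of (by omega : a < c) (by omega : c < b) (by omega : b < f))
        · exact Or.inr (crosses_of (by omega : c < a) (by omega : a < f) (by omega : f < b))
      · rcases Nat.lt_or_ge a.val f.val with h1 | h1
        · exact Or.inl (by rw [pair_comm c f]; exact crosses_of (by omega : a < f) (by omega : f < b) (by omega : b < c))
        · exact Or.inr (by rw [pair_comm c f]; exact crosses_of (by omega : f < a) (by omega : a < c) (by omega : c < b))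
    · rcases Nat.lt_or_ge c.val f.val with hcf | hcf
      · rcases Nat.lt_or_ge b.val c.val with h1 | h1
        · exact Or.inl (by rw [pair_comm a b]; exact crosses_of (by omega : b < c) (by omega : c < a) (by omega : a < f))
        · exact Or.inr (by rw [pair_comm a b]; exact crosses_of (by omega : c < b) (by omega : b < f) (by omega : f < a))
      · rcases Nat.lt_or_ge b.val f.val with h1 | h1
        · exact Or.inl (by rw [pair_comm a b, pair_comm c f]; exact crosses_of (by omega : b < f) (by omega : f < a) (by omega : a < c))
        · exact Or.inr (by rw [pair_comm a b, pair_comm c f]; exact crosses_of (by omega : f < b) (by omega : b < c) (by omega : c < a))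

end Aux
section RotAux
variable {N : ℕ}

/-- position of `y` in the cyclic order starting at `x` -/
def R (x y : Fin N) : ℕ := (y - x).val

def btwR (x a b u : Fin N) : Prop :=
  (R x a < R x u ∧ R x u < R x b) ∨ (R x b < R x u ∧ R x u < R x a)

lemma R_cases (x y : Fin N) :
    (y.val + (N - x.val) < N ∧ R x y = y.val + (N - x.val)) ∨
    (N ≤ y.val + (N - x.val) ∧ R x y = y.val + (N - x.val) - N) := by
  have h : R x y = (y.val + (N - x.val)) % N := by
    simp [R, Fin.sub_def, Nat.add_comm]
  rcases Nat.lt_or_ge (y.val + (N - x.val)) N with hh | hh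
  · exact Or.inl ⟨hh, by rw [h, Nat.mod_eq_of_lt hh]⟩
  · refine Or.inr ⟨hh, ?_⟩
    rw [h, Nat.mod_eq_sub_mod hh, Nat.mod_eq_of_lt (by have := y.isLt; omega)]

set_option maxHeartbeats 1000000 in
private lemma rot_arith (M k a b c f A B C F : ℕ)
    (ha : a < M) (hb : b < M) (hc : c < M) (hf : f < M)
    (dac : a ≠ c) (daf : a ≠ f) (dbc : b ≠ c) (dbf : b ≠ f) (dcf : c ≠ f)
    (hA : (a + k < M ∧ A = a + k) ∨ (M ≤ a + k ∧ A = a + k - M))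
    (hB : (b + k < M ∧ B = b + k) ∨ (M ≤ b + k ∧ B = b + k - M))
    (hC : (c + k < M ∧ C = c + k) ∨ (M ≤ c + k ∧ C = c + k - M))
    (hF : (f + k < M ∧ F = f + k) ∨ (M ≤ f + k ∧ F = f + k - M)) :
    (((a < c ∧ c < b) ∨ (b < c ∧ c < a)) ↔ ¬((a < f ∧ f < b) ∨ (b < f ∧ f < a)))
    ↔ (((A < C ∧ C < B) ∨ (B < C ∧ C < A)) ↔ ¬((A < F ∧ F < B) ∨ (B < F ∧ F < A))) := by
  rcases hA with ⟨h1,hA⟩|⟨h1,hA⟩ <;> rcases hB with ⟨h2,hB⟩|⟨h2,hB⟩ <;>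
    rcases hC with ⟨h3,hC⟩|⟨h3,hC⟩ <;> rcases hF with ⟨h4,hF⟩|⟨h4,hF⟩ <;>
    subst hA <;> subst hB <;> subst hC <;> subst hF <;> omega

/-- crossing parity in rotated coordinates based at any `x` -/
lemma btw_xor_iff_btwR_xor {x a b c f : Fin N}
    (dac : a ≠ c) (daf : a ≠ f) (dbc : b ≠ c) (dbf : b ≠ f) (dcf : c ≠ f) :
    (btw a b c ↔ ¬ btw a b f) ↔ (btwR x a b c ↔ ¬ btwR x a b f) := by
  have dac' : a.val ≠ c.val := fun hh => dac (Fin.ext hh)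
  have daf' : a.val ≠ f.val := fun hh => daf (Fin.ext hh)
  have dbc' : b.val ≠ c.val := fun hh => dbc (Fin.ext hh)
  have dbf' : b.val ≠ f.val := fun hh => dbf (Fin.ext hh)
  have dcf' : c.val ≠ f.val := fun hh => dcf (Fin.ext hh)
  have key := rot_arith N (N - x.val) a.val b.val c.val f.val
    (R x a) (R x b) (R x c) (R x f) a.isLt b.isLt c.isLt f.isLt
    dac' daf' dbc' dbf' dcf' (R_cases x a) (R_cases x b) (R_cases x c) (R_cases x f)
  simpa only [btw, btwR] using key

lemma X_iff_R {x a b c f : Fin N} (dab : a ≠ b) (dac : a ≠ c) (daf : a ≠ f)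
    (dbc : b ≠ c) (dbf : b ≠ f) (dcf : c ≠ f) :
    X {a,b} {c,f} ↔ (btwR x a b c ↔ ¬ btwR x a b f) := by
  rw [X_iff dab dac daf dbc dbf dcf, btw_xor_iff_btwR_xor dac daf dbc dbf dcf]

lemma R_self (x : Fin N) : R x x = 0 := by
  have := R_cases x x; have := x.isLt; omega

lemma R_inj {x y z : Fin N} (h : R x y = R x z) : y = z := by
  have h1 := R_cases x y; have h2 := R_cases x z
  have := x.isLt; have := y.isLt; have := z.isLt
  exact Fin.ext (by omega)

lemma R_eq_zero_iff {x y : Fin N} : R x y = 0 ↔ y = x := by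
  constructor
  · intro h
    have h2 : R x y = R x x := by rw [h, R_self]
    exact R_inj h2
  · rintro rfl; exact R_self _

end RotAux
section Fan
open Finset

variable {n : ℕ}

/-- The neighbours of `x` in the triangulated polygon. -/
noncomputable def nbrs (T : Triangulation (n+3)) (x : Fin (n+3)) : Finset (Fin (n+3)) :=
  @Finset.filter _ (fun y => IsEdge T x y) (Classical.decPred _) Finset.univ

lemma mem_nbrs {T : Triangulation (n+3)} {x y : Fin (n+3)} :
    y ∈ nbrs T x ↔ IsEdge T x y := by
  simp [nbrs]

lemma isEdge_symm {T : Triangulation (n+3)} {a b : Fin (n+3)} (h : IsEdge T a b) :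
    IsEdge T b a := by
  refine ⟨h.1.symm, ?_⟩
  rcases h.2 with h2 | h2
  · exact Or.inl h2.symm
  · exact Or.inr (by rwa [pair_comm])

/-- Sorted list of positions (relative to `x`) of the neighbours of `x`. -/
noncomputable def fanList (T : Triangulation (n+3)) (x : Fin (n+3)) : List (Fin (n+3)) :=
  ((nbrs T x).image (fun y => y - x)).sort (·≤·)

noncomputable def fanK (T : Triangulation (n+3)) (x : Fin (n+3)) : ℕ := (fanList T x).length

noncomputable def fanR (T : Triangulation (n+3)) (x : Fin (n+3)) (i : ℕ) : Fin (n+3) :=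
  (fanList T x).getD i 0

/-- The `i`-th neighbour of `x` in cyclic order around `x`. -/
noncomputable def fan (T : Triangulation (n+3)) (x : Fin (n+3)) (i : ℕ) : Fin (n+3) :=
  fanR T x i + x

variable {T : Triangulation (n+3)} {x : Fin (n+3)}

lemma fanR_mem {i : ℕ} (h : i < fanK T x) :
    fanR T x i ∈ (nbrs T x).image (fun y => y - x) := by
  rw [fanR, List.getD_eq_getElem _ _ h]
  exact (Finset.mem_sort _).mp (List.getElem_mem _)

lemma mem_fanR {z : Fin (n+3)} (h : z ∈ (nbrs T x).image (fun y => y - x)) :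
    ∃ i, i < fanK T x ∧ fanR T x i = z := by
  have h2 : z ∈ fanList T x := (Finset.mem_sort _).mpr h
  obtain ⟨i, hi, hz⟩ := List.mem_iff_getElem.mp h2
  exact ⟨i, hi, by rw [fanR, List.getD_eq_getElem _ _ hi]; exact hz⟩

lemma fanR_strict {i j : ℕ} (hij : i < j) (hj : j < fanK T x) :
    fanR T x i < fanR T x j := by
  have hs : (fanList T x).Pairwise (· < ·) := List.sortedLT_iff_pairwise.mp (Finset.sortedLT_sort _)
  have hi : i < fanK T x := lt_trans hij hj
  rw [fanR, fanR, List.getD_eq_getElem _ _ hi, List.getD_eq_getElem _ _ hj]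
  exact hs.rel_get_of_lt (a := ⟨i, hi⟩) (b := ⟨j, hj⟩) hij

lemma fan_sub (i : ℕ) : fan T x i - x = fanR T x i := by
  rw [fan, add_sub_cancel_right]

lemma R_fan (i : ℕ) : R x (fan T x i) = (fanR T x i).val := by
  rw [R, fan_sub]

lemma fan_mem {i : ℕ} (h : i < fanK T x) : IsEdge T x (fan T x i) := by
  obtain ⟨y, hy, hyx⟩ := Finset.mem_image.mp (fanR_mem h)
  have : y = fan T x i := by rw [fan, ← hyx, sub_add_cancel]
  rw [← this]; exact mem_nbrs.mp hy

lemma fan_surj {y : Fin (n+3)} (h : IsEdge T x y) :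
    ∃ i, i < fanK T x ∧ fan T x i = y := by
  obtain ⟨i, hi, hz⟩ := mem_fanR (Finset.mem_image_of_mem _ (mem_nbrs.mpr h))
  exact ⟨i, hi, by rw [fan, hz, sub_add_cancel]⟩

lemma fanR_ne_zero {i : ℕ} (h : i < fanK T x) : fanR T x i ≠ 0 := by
  intro h0
  obtain ⟨y, hy, hyx⟩ := Finset.mem_image.mp (fanR_mem h)
  rw [h0, sub_eq_zero] at hyx
  exact (mem_nbrs.mp hy).1 hyx.symm

lemma fanR_val_pos {i : ℕ} (h : i < fanK T x) : 1 ≤ (fanR T x i).val := by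
  have := fanR_ne_zero h
  have h2 : (fanR T x i).val ≠ 0 := fun hh => this (Fin.ext hh)
  omega

lemma one_mem_fan : ∃ i, i < fanK T x ∧ fan T x i = x + 1 := by
  apply fan_surj
  refine ⟨fun hh => ?_, Or.inl (Or.inl (by simp [Fin.add_def]))⟩
  exact absurd hh (by simp)

lemma negone_mem_fan : ∃ i, i < fanK T x ∧ fan T x i = x - 1 := by
  apply fan_surj
  constructor
  · intro hh
    exact absurd hh (by rw [sub_eq_add_neg]; simp)
  · refine Or.inl (Or.inr ?_)
    have h : ((x-1) + 1).val = ((x-1).val + 1) % (n+3) := by rw [Fin.add_def, Fin.val_one]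
    rw [← h, sub_add_cancel]

end Fan
section Fan2
open Finset

variable {n : ℕ} {T : Triangulation (n+3)} {x : Fin (n+3)}

lemma fanK_pos : 0 < fanK T x := by
  obtain ⟨i, hi, -⟩ := one_mem_fan (T := T) (x := x); omega

lemma fanR_lt_index {i j : ℕ} (hi : i < fanK T x) (hj : j < fanK T x)
    (h : (fanR T x i).val < (fanR T x j).val) : i < j := by
  rcases Nat.lt_trichotomy i j with hh | hh | hh
  · exact hh
  · subst hh; omega
  · have := fanR_strict hh hi
    rw [Fin.lt_def] at this; omega

lemma fanR_index_inj {i j : ℕ} (hi : i < fanK T x) (hj : j < fanK T x)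
    (h : fanR T x i = fanR T x j) : i = j := by
  rcases Nat.lt_trichotomy i j with hh | hh | hh
  · have := fanR_strict hh hj; rw [Fin.lt_def] at this; rw [h] at this; omega
  · exact hh
  · have := fanR_strict hh hi; rw [Fin.lt_def] at this; rw [h] at this; omega

lemma fan_index_inj {i j : ℕ} (hi : i < fanK T x) (hj : j < fanK T x)
    (h : fan T x i = fan T x j) : i = j := by
  apply fanR_index_inj hi hj
  have := congrArg (fun z => z - x) h
  simpa [fan_sub] using this

lemma fanR_zero : fanR T x 0 = 1 := by
  obtain ⟨i, hi, h1⟩ := one_mem_fan (T := T) (x := x)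
  have h2 : fanR T x i = 1 := by
    rw [← fan_sub]; rw [h1]; exact add_sub_cancel_left x 1
  rcases Nat.eq_zero_or_pos i with rfl | hpos
  · exact h2
  · exfalso
    have h3 := fanR_strict hpos hi
    rw [h2, Fin.lt_def, Fin.val_one] at h3
    have h4 := fanR_val_pos (fanK_pos (T := T) (x := x))
    omega

lemma fan_zero : fan T x 0 = x + 1 := by
  rw [fan, fanR_zero]; exact add_comm 1 x

lemma fanR_last : fanR T x (fanK T x - 1) = -1 := by
  obtain ⟨i, hi, h1⟩ := negone_mem_fan (T := T) (x := x)
  have h2 : fanR T x i = -1 := by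
    rw [← fan_sub, h1]; abel
  rcases Nat.lt_or_ge i (fanK T x - 1) with hlt | hge
  · exfalso
    have h3 := fanR_strict hlt (by omega : fanK T x - 1 < fanK T x)
    rw [h2, Fin.lt_def, Fin.coe_neg_one] at h3
    have := (fanR T x (fanK T x - 1)).isLt
    omega
  · have : i = fanK T x - 1 := by omega
    rw [← this]; exact h2

lemma fan_last : fan T x (fanK T x - 1) = x - 1 := by
  rw [fan, fanR_last]; abel

lemma fanK_ge_two : 2 ≤ fanK T x := by
  obtain ⟨i, hi, h1⟩ := one_mem_fan (T := T) (x := x)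
  obtain ⟨j, hj, h2⟩ := negone_mem_fan (T := T) (x := x)
  have hij : i ≠ j := by
    intro h
    rw [h, h2] at h1
    have h3 : (-1 : Fin (n+3)) = 1 := by
      have := congrArg (fun z => z - x) h1
      simpa [sub_eq_add_neg, add_comm] using this
    rw [Fin.ext_iff, Fin.coe_neg_one, Fin.val_one] at h3
    omega
  omega

lemma bdryAdj_iff {p q : Fin (n+3)} : BdryAdj (n+3) p q ↔ q = p + 1 ∨ p = q + 1 := by
  have h : ∀ r s : Fin (n+3), ((r.val + 1) % (n+3) = s.val) ↔ s = r + 1 := by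
    intro r s
    rw [Fin.ext_iff, Fin.add_def, Fin.val_one]
    exact eq_comm
  unfold BdryAdj
  rw [h, h]

lemma X_ne {p q r s : Fin (n+3)} (h : X {p,q} {r,s}) :
    p ≠ q ∧ r ≠ s ∧ p ≠ r ∧ p ≠ s ∧ q ≠ r ∧ q ≠ s := by
  obtain ⟨a,b,c,f,hd,he,h1,h2,h3,h4,h5,h6⟩ := X_pairs h
  rcases pair_eq' hd with ⟨rfl,rfl⟩|⟨rfl,rfl⟩ <;> rcases pair_eq' he with ⟨rfl,rfl⟩|⟨rfl,rfl⟩ <;>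
    refine ⟨?_,?_,?_,?_,?_,?_⟩ <;> first | assumption | (exact Ne.symm ‹_›)

lemma ne_of_R_pos {y : Fin (n+3)} (h : 0 < R x y) : y ≠ x :=
  fun hh => by rw [hh, R_self] at h; omega

lemma bdry_no_cross {p q r s : Fin (n+3)} (hadj : BdryAdj (n+3) p q) : ¬ X {p,q} {r,s} := by
  intro hX
  obtain ⟨hpq, hrs, hpr, hps, hqr, hqs⟩ := X_ne hX
  have key : ∀ p' q' : Fin (n+3), q' = p' + 1 → p' ≠ q' → p' ≠ r → p' ≠ s → q' ≠ r → q' ≠ s →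
      X {p', q'} {r, s} → False := by
    intro p q h1 hpq hpr hps hqr hqs hX
    rw [X_iff_R (x := q) hpq hpr hps hqr hqs hrs] at hX
    have hqp : R q p = n + 2 := by
      have hp : p - q = -1 := by rw [h1]; abel
      rw [R, hp, Fin.coe_neg_one]
    have hr0 : R q r ≠ 0 := fun hh => hqr (R_eq_zero_iff.mp hh).symm
    have hs0 : R q s ≠ 0 := fun hh => hqs (R_eq_zero_iff.mp hh).symm
    have hrn : R q r ≠ n + 2 := by
      intro hh; rw [← hqp] at hh; exact hpr (R_inj hh).symm
    have hsn : R q s ≠ n + 2 := by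
      intro hh; rw [← hqp] at hh; exact hps (R_inj hh).symm
    have hrb : R q r < n + 3 := (r - q).isLt
    have hsb : R q s < n + 3 := (s - q).isLt
    have hqq : R q q = 0 := R_self q
    simp only [btwR, hqp, hqq] at hX
    omega
  rcases bdryAdj_iff.mp hadj with h1 | h1
  · exact key p q h1 hpq hpr hps hqr hqs hX
  · exact key q p h1 hpq.symm hqr hqs hpr hps (by rwa [pair_comm q p])

lemma diags_no_cross {d e : Finset (Fin (n+3))} (hd : d ∈ T.diags) (he : e ∈ T.diags) :
    ¬ X d e :=
  fun h => h.elim (T.noncross d hd e he) (T.noncross e he d hd)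

lemma edges_no_cross {p q r s : Fin (n+3)} (h1 : IsEdge T p q) (h2 : IsEdge T r s) :
    ¬ X {p,q} {r,s} := by
  intro hX
  rcases h1.2 with hb | hd1
  · exact bdry_no_cross hb hX
  rcases h2.2 with hb | hd2
  · exact bdry_no_cross hb (X_symm hX)
  exact diags_no_cross hd1 hd2 hX

lemma no_nbr_between {i : ℕ} (hi : i + 1 < fanK T x) {c : Fin (n+3)}
    (hc : IsEdge T x c)
    (h1 : (fanR T x i).val < R x c) (h2 : R x c < (fanR T x (i+1)).val) : False := by
  obtain ⟨j, hj, hcj⟩ := fan_surj hc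
  rw [← hcj, R_fan] at h1 h2
  have hij : i < j := fanR_lt_index (by omega) hj h1
  have hji : j < i + 1 := fanR_lt_index hj hi h2
  omega

end Fan2
section Fan3
open Finset

variable {n : ℕ} {T : Triangulation (n+3)} {x : Fin (n+3)}

lemma fan_ne_x {i : ℕ} (hi : i < fanK T x) : fan T x i ≠ x := by
  apply ne_of_R_pos
  rw [R_fan]
  exact fanR_val_pos hi

lemma fan_consec_edge {i : ℕ} (hi : i + 1 < fanK T x) :
    IsEdge T (fan T x i) (fan T x (i+1)) := by
  have hiK : i < fanK T x := by omega
  have hau : R x (fan T x i) = (fanR T x i).val := R_fan i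
  have hav : R x (fan T x (i+1)) = (fanR T x (i+1)).val := R_fan (i+1)
  have hlt : (fanR T x i).val < (fanR T x (i+1)).val := by
    have := fanR_strict (Nat.lt_succ_self i) hi
    rwa [Fin.lt_def] at this
  have hu1 : 1 ≤ (fanR T x i).val := fanR_val_pos hiK
  have hvN : (fanR T x (i+1)).val < n+3 := (fanR T x (i+1)).isLt
  have huv : fan T x i ≠ fan T x (i+1) := fun h => by
    have := fan_index_inj hiK hi h; omega
  by_cases hconsec : (fanR T x (i+1)).val = (fanR T x i).val + 1
  · -- v = u + 1 : boundary edge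
    have hR : fanR T x (i+1) = fanR T x i + 1 := by
      apply Fin.ext
      have h2 : (fanR T x i + 1).val = ((fanR T x i).val + 1) % (n+3) := by
        rw [Fin.add_def, Fin.val_one]
      rw [h2, Nat.mod_eq_of_lt (by omega)]
      exact hconsec
    have hv1 : fan T x (i+1) = fan T x i + 1 := by
      rw [fan, fan, hR, add_right_comm]
    refine ⟨huv, Or.inl (Or.inl ?_)⟩
    rw [hv1, Fin.add_def, Fin.val_one]
  · -- there is a gap : {u,v} must be a diagonal
    have hgap : (fanR T x i).val + 1 < (fanR T x (i+1)).val := by omega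
    have hnotbdry : ¬ BdryAdj (n+3) (fan T x i) (fan T x (i+1)) := by
      intro hb
      rcases bdryAdj_iff.mp hb with h1 | h1
      · have hR : fanR T x (i+1) = fanR T x i + 1 := by
          rw [← fan_sub, ← fan_sub, h1, sub_add_eq_add_sub]
        have hval : (fanR T x (i+1)).val = ((fanR T x i).val + 1) % (n+3) := by
          rw [hR, Fin.add_def, Fin.val_one]
        rw [Nat.mod_eq_of_lt (by omega)] at hval
        omega
      · have hR : fanR T x i = fanR T x (i+1) + 1 := by
          rw [← fan_sub, ← fan_sub, h1, sub_add_eq_add_sub]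
        have hval : (fanR T x i).val = ((fanR T x (i+1)).val + 1) % (n+3) := by
          rw [hR, Fin.add_def, Fin.val_one]
        rcases Nat.lt_or_ge ((fanR T x (i+1)).val + 1) (n+3) with hc | hc
        · rw [Nat.mod_eq_of_lt hc] at hval; omega
        · have h3 : (fanR T x (i+1)).val + 1 = n + 3 := by omega
          rw [h3, Nat.mod_self] at hval; omega
    have hdiag : IsDiag (n+3) ({fan T x i, fan T x (i+1)} : Finset (Fin (n+3))) :=
      ⟨_, _, huv, hnotbdry, rfl⟩
    have hmem : ({fan T x i, fan T x (i+1)} : Finset (Fin (n+3))) ∈ T.diags := by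
      apply T.maximal _ hdiag
      intro e he
      have key : ¬ X {fan T x i, fan T x (i+1)} e := by
        intro hX
        obtain ⟨c0, d0, hcd0, hnb0, he'⟩ := T.isDiag e he
        subst he'
        obtain ⟨-, hcd', huc0, hud0, hvc0, hvd0⟩ := X_ne hX
        rw [X_iff_R (x := x) huv huc0 hud0 hvc0 hvd0 hcd'] at hX
        have main : ∀ c d : Fin (n+3), c ≠ d → ({c,d} : Finset (Fin (n+3))) ∈ T.diags →
            fan T x i ≠ c → fan T x i ≠ d → fan T x (i+1) ≠ c → fan T x (i+1) ≠ d →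
            btwR x (fan T x i) (fan T x (i+1)) c →
            ¬ btwR x (fan T x i) (fan T x (i+1)) d → False := by
          intro c d hcd hmem' huc hud hvc hvd hbc hbd
          have hc1 : (fanR T x i).val < R x c ∧ R x c < (fanR T x (i+1)).val := by
            rcases hbc with ⟨h1, h2⟩ | ⟨h1, h2⟩
            · rw [hau] at h1; rw [hav] at h2; exact ⟨h1, h2⟩
            · rw [hav] at h1; rw [hau] at h2; omega
          have hcx : c ≠ x := ne_of_R_pos (by omega)
          by_cases hdx : d = x
          · rw [hdx] at hmem'
            have hedge : IsEdge T x c := ⟨fun h => hcx h.symm, Or.inr (by rwa [pair_comm])⟩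
            exact no_nbr_between hi hedge hc1.1 hc1.2
          · have hd0 : 0 < R x d := by
              rcases Nat.eq_zero_or_pos (R x d) with h0 | h0
              · exact absurd (R_eq_zero_iff.mp h0) hdx
              · exact h0
            have hdu : R x d ≠ R x (fan T x i) := fun h => hud (R_inj h).symm
            have hdv : R x d ≠ R x (fan T x (i+1)) := fun h => hvd (R_inj h).symm
            have hout : R x d < (fanR T x i).val ∨ (fanR T x (i+1)).val < R x d := by
              simp only [btwR, not_or, not_and, not_lt] at hbd
              rw [hau, hav] at hbd
              rw [hau] at hdu; rw [hav] at hdv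
              omega
            have hedgecd : IsEdge T c d := ⟨hcd, Or.inr hmem'⟩
            have hxc : x ≠ c := fun h => hcx h.symm
            have hxd : x ≠ d := fun h => hdx h.symm
            rcases hout with hside | hside
            · -- d is before u : cross chord {x, fan i}
              have hXnew : X {x, fan T x i} {c, d} := by
                rw [X_iff_R (x := x) (fan_ne_x hiK).symm hxc hxd huc hud hcd]
                simp only [btwR, R_self, hau]
                omega
              exact edges_no_cross (fan_mem hiK) hedgecd hXnew
            · -- d is after v : cross chord {x, fan (i+1)}
              have hXnew : X {x, fan T x (i+1)} {c, d} := by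
                rw [X_iff_R (x := x) (fan_ne_x hi).symm hxc hxd hvc hvd hcd]
                simp only [btwR, R_self, hav]
                omega
              exact edges_no_cross (fan_mem hi) hedgecd hXnew
        by_cases hbc : btwR x (fan T x i) (fan T x (i+1)) c0
        · exact main c0 d0 hcd0 he huc0 hud0 hvc0 hvd0 hbc (hX.mp hbc)
        · have hbd : btwR x (fan T x i) (fan T x (i+1)) d0 := by
            by_contra hh
            exact hbc (hX.mpr hh)
          exact main d0 c0 hcd0.symm (by rwa [pair_comm]) hud0 huc0 hvd0 hvc0 hbd hbc
      exact ⟨fun hc => key (Or.inl hc), fun hc => key (Or.inr hc)⟩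
    exact ⟨huv, Or.inr hmem⟩

end Fan3
section Fan4
open Finset

variable {n : ℕ} {T : Triangulation (n+3)} {x : Fin (n+3)}

lemma fan_tri {i : ℕ} (hi : i + 1 < fanK T x) :
    IsTriangle T {x, fan T x i, fan T x (i+1)} := by
  have hiK : i < fanK T x := by omega
  have huv : fan T x i ≠ fan T x (i+1) := fun h => by
    have := fan_index_inj hiK hi h; omega
  exact ⟨x, fan T x i, fan T x (i+1), (fan_ne_x hiK).symm, (fan_ne_x hi).symm, huv,
    rfl, fan_mem hiK, fan_mem hi, fan_consec_edge hi⟩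

lemma fan_inner_diag {i : ℕ} (h0 : 0 < i) (h1 : i + 1 < fanK T x) :
    ({x, fan T x i} : Finset (Fin (n+3))) ∈ T.diags := by
  have hiK : i < fanK T x := by omega
  have hnb : ¬ BdryAdj (n+3) x (fan T x i) := by
    intro hb
    rcases bdryAdj_iff.mp hb with hh | hh
    · -- fan i = x + 1 = fan 0
      rw [← fan_zero (T := T)] at hh
      have := fan_index_inj hiK (fanK_pos) hh
      omega
    · -- x = fan i + 1, i.e. fan i = x - 1 = fan (K-1)
      have h2 : fan T x i = x - 1 := eq_sub_of_add_eq hh.symm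
      rw [← fan_last (T := T)] at h2
      have := fan_index_inj hiK (by omega : fanK T x - 1 < fanK T x) h2
      omega
  rcases (fan_mem hiK).2 with hb | hd
  · exact absurd hb hnb
  · exact hd

lemma tri_decomp {t : Finset (Fin (n+3))} (ht : IsTriangle T t) (hx : x ∈ t) :
    ∃ u v, t = {x, u, v} ∧ IsEdge T x u ∧ IsEdge T x v ∧ IsEdge T u v ∧
      u ≠ v ∧ x ≠ u ∧ x ≠ v := by
  obtain ⟨a, b, c, hab, hac, hbc, ht', e1, e2, e3⟩ := ht
  subst ht'
  simp only [Finset.mem_insert, Finset.mem_singleton] at hx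
  rcases hx with rfl | rfl | rfl
  · exact ⟨b, c, rfl, e1, e2, e3, hbc, hab, hac⟩
  · refine ⟨a, c, ?_, isEdge_symm e1, e3, e2, hac, hab.symm, hbc⟩
    ext y; simp; tauto
  · refine ⟨a, b, ?_, isEdge_symm e2, isEdge_symm e3, e1, hab, hac.symm, hbc.symm⟩
    ext y; simp; tauto

lemma fan_edge_consec {i j : ℕ} (hij : i < j) (hj : j < fanK T x)
    (he : IsEdge T (fan T x i) (fan T x j)) : j = i + 1 := by
  by_contra hne
  have hi1 : i + 1 < j := by omega
  have hiK : i < fanK T x := by omega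
  have hi1K : i + 1 < fanK T x := by omega
  have hw1 : (fanR T x i).val < (fanR T x (i+1)).val := by
    have := fanR_strict (Nat.lt_succ_self i) hi1K; rwa [Fin.lt_def] at this
  have hw2 : (fanR T x (i+1)).val < (fanR T x j).val := by
    have := fanR_strict hi1 hj; rwa [Fin.lt_def] at this
  have hij' : i ≠ j := by omega
  have hij1' : i + 1 ≠ j := by omega
  have huv : fan T x i ≠ fan T x j := fun h => hij' (fan_index_inj hiK hj h)
  have huw : fan T x i ≠ fan T x (i+1) := fun h => by
    have := fan_index_inj hiK hi1K h; omega
  have hvw : fan T x j ≠ fan T x (i+1) := fun h => hij1' (fan_index_inj hj hi1K h).symm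
  have hXnew : X {fan T x i, fan T x j} {x, fan T x (i+1)} := by
    rw [X_iff_R (x := x) huv (fan_ne_x hiK) huw (fan_ne_x hj) hvw (fan_ne_x hi1K).symm]
    simp only [btwR, R_self, R_fan]
    omega
  exact edges_no_cross he ⟨(fan_ne_x hi1K).symm, (fan_mem hi1K).2⟩ hXnew

lemma triangle_mem_fan {t : Finset (Fin (n+3))} (ht : IsTriangle T t) (hx : x ∈ t) :
    ∃ i, i + 1 < fanK T x ∧ t = {x, fan T x i, fan T x (i+1)} := by
  obtain ⟨u, v, ht', exu, exv, euv, huv, hxu, hxv⟩ := tri_decomp ht hx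
  obtain ⟨i, hi, hiu⟩ := fan_surj exu
  obtain ⟨j, hj, hjv⟩ := fan_surj exv
  have hij : i ≠ j := fun h => huv (by rw [← hiu, ← hjv, h])
  rcases Nat.lt_or_ge i j with hlt | hge
  · have := fan_edge_consec hlt hj (by rw [hiu, hjv]; exact euv)
    subst this
    exact ⟨i, hj, by rw [ht', hiu, hjv]⟩
  · have hlt : j < i := by omega
    have := fan_edge_consec hlt hi (by rw [hiu, hjv]; exact isEdge_symm euv)
    subst this
    refine ⟨j, hi, ?_⟩
    rw [ht', ← hiu, ← hjv]
    exact congrArg (insert x) (pair_comm _ _)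

lemma fan_tri_inj {i j : ℕ} (hi : i + 1 < fanK T x) (hj : j + 1 < fanK T x)
    (h : ({x, fan T x i, fan T x (i+1)} : Finset (Fin (n+3))) = {x, fan T x j, fan T x (j+1)}) :
    i = j := by
  have hiK : i < fanK T x := by omega
  have hjK : j < fanK T x := by omega
  have hxfi : x ∉ ({fan T x i, fan T x (i+1)} : Finset (Fin (n+3))) := by
    simp only [Finset.mem_insert, Finset.mem_singleton]
    push_neg
    exact ⟨fun hh => (fan_ne_x hiK) hh.symm, fun hh => (fan_ne_x hi) hh.symm⟩
  have hxfj : x ∉ ({fan T x j, fan T x (j+1)} : Finset (Fin (n+3))) := by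
    simp only [Finset.mem_insert, Finset.mem_singleton]
    push_neg
    exact ⟨fun hh => (fan_ne_x hjK) hh.symm, fun hh => (fan_ne_x hj) hh.symm⟩
  have h2 : ({fan T x i, fan T x (i+1)} : Finset (Fin (n+3))) = {fan T x j, fan T x (j+1)} := by
    have := congrArg (fun s => Finset.erase s x) h
    simpa [Finset.erase_insert, hxfi, hxfj] using this
  rcases pair_eq' h2 with ⟨ha, -⟩ | ⟨ha, hb⟩
  · exact fan_index_inj hiK hjK ha
  · have h3 := fan_index_inj hiK hj ha
    have h4 := fan_index_inj hi hjK hb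
    omega

end Fan4
section Final
open Finset

variable {n : ℕ}

/-- colour of the `i`-th fan triangle at `x` -/
noncomputable def sfun (C : ColouredTri (n+3) 2) (x : Fin (n+3)) (i : ℕ) : Fin 2 :=
  if h : i + 1 < fanK C.T x
  then C.col ⟨{x, fan C.T x i, fan C.T x (i+1)}, fan_tri h⟩ else 0

/-- auxiliary injection of the three colours `≠ e` into `ZMod 3` -/
def phi (e c : Fin 4) : ZMod 3 := (((c - e).val - 1 : ℕ) : ZMod 3)

lemma phi_inj : ∀ e u v : Fin 4, u ≠ e → v ≠ e → (phi e u = phi e v ↔ u = v) := by decide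

lemma sign_cases : ∀ p : Fin 2, signVal p = 1 ∨ signVal p = -1 := by decide

lemma sign_ne_zero : ∀ p : Fin 2, signVal p ≠ 0 := by decide

lemma sign_sq : ∀ p : Fin 2, signVal p * signVal p = 1 := by decide

lemma sign_ne_iff : ∀ p q : Fin 2, p ≠ q ↔ signVal q = - signVal p := by decide

lemma zmod3_step : ∀ ε u v d : ZMod 3, ε ≠ 0 → (u = 1 ∨ u = -1) → (v = 1 ∨ v = -1) →
    d ≠ 0 → ((ε * u + d = 0) ↔ (v = -u)) → d = ε * v := by decide

lemma weight_eq_fan_sum (C : ColouredTri (n+3) 2) (x : Fin (n+3)) :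
    weight C x = ∑ i ∈ Finset.range (fanK C.T x - 1), signVal (sfun C x i) := by
  classical
  rw [weight, finsum_eq_sum_of_fintype, ← Finset.sum_filter]
  symm
  refine Finset.sum_bij
    (fun (i : ℕ) (hi : i ∈ Finset.range (fanK C.T x - 1)) =>
      (⟨{x, fan C.T x i, fan C.T x (i+1)},
        fan_tri (by simp only [Finset.mem_range] at hi; omega)⟩ : {t // IsTriangle C.T t}))
    ?_ ?_ ?_ ?_
  · intro a ha
    simp only [Finset.mem_filter, Finset.mem_univ, true_and]
    simp
  · intro a1 h1 a2 h2 heq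
    simp only [Subtype.mk.injEq] at heq
    simp only [Finset.mem_range] at h1 h2
    exact fan_tri_inj (by omega) (by omega) heq
  · intro b hb
    simp only [Finset.mem_filter, Finset.mem_univ, true_and] at hb
    obtain ⟨i, hi, hb'⟩ := triangle_mem_fan b.prop hb
    exact ⟨i, Finset.mem_range.mpr (by omega), Subtype.ext hb'.symm⟩
  · intro a ha
    simp only [Finset.mem_range] at ha
    have h' : a + 1 < fanK C.T x := by omega
    simp only [sfun, dif_pos h']

theorem weight_zero_iff_aux (n : ℕ)
    (C : ColouredTri (n + 3) 2) (col : Fin (n + 3) → Fin 4)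
    (hcomp : Compatible C col) (x : Fin (n + 3)) :
    weight C x = 0 ↔ col (x - 1) = col (x + 1) := by
  have hk2 : 2 ≤ fanK C.T x := fanK_ge_two
  set k := fanK C.T x with hkdef
  -- c i = colour of i-th fan vertex
  have hq1 : ∀ i, i + 1 < k → col (fan C.T x i) ≠ col (fan C.T x (i+1)) :=
    fun i h => hcomp.1 _ _ (fan_consec_edge h)
  have hq2 : ∀ i, i < k → col (fan C.T x i) ≠ col x :=
    fun i h => (hcomp.1 _ _ (fan_mem h)).symm
  have hq3 : ∀ i, i + 2 < k →
      (col (fan C.T x i) = col (fan C.T x (i+2)) ↔ sfun C x i ≠ sfun C x (i+1)) := by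
    intro i h
    have h1K : i + 1 < k := by omega
    have h2K : (i+1) + 1 < k := by omega
    have hset : ({x, fan C.T x (i+1), fan C.T x i} : Finset (Fin (n+3)))
        = {x, fan C.T x i, fan C.T x (i+1)} := congrArg (insert x) (pair_comm _ _)
    have htri1 : IsTriangle C.T {x, fan C.T x (i+1), fan C.T x i} := by
      rw [hset]; exact fan_tri h1K
    have htri2 : IsTriangle C.T {x, fan C.T x (i+1), fan C.T x (i+2)} := fan_tri h2K
    have hfne : fan C.T x i ≠ fan C.T x (i+2) := by
      intro hh
      have := fan_index_inj (by omega) (by omega) hh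
      omega
    have hdiag : ({x, fan C.T x (i+1)} : Finset (Fin (n+3))) ∈ C.T.diags := by
      apply fan_inner_diag (by omega) (by omega)
    have key := hcomp.2 x (fan C.T x (i+1)) (fan C.T x i) (fan C.T x (i+2))
      htri1 htri2 hfne hdiag
    have e1 : C.col ⟨{x, fan C.T x (i+1), fan C.T x i}, htri1⟩ = sfun C x i := by
      rw [sfun, dif_pos (h1K : i + 1 < fanK C.T x)]
      exact congrArg C.col (Subtype.ext hset : (⟨_, htri1⟩ : {t // IsTriangle C.T t}) = ⟨_, fan_tri h1K⟩)
    have e2 : C.col ⟨{x, fan C.T x (i+1), fan C.T x (i+2)}, htri2⟩ = sfun C x (i+1) := by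
      rw [sfun, dif_pos (h2K : i + 1 + 1 < fanK C.T x)]
    rw [key, e1, e2]
  -- the increments
  set e := col x with hedef
  set D : ℕ → ZMod 3 := fun i => phi e (col (fan C.T x (i+1))) - phi e (col (fan C.T x i))
    with hDdef
  have hD_ne : ∀ i, i + 1 < k → D i ≠ 0 := by
    intro i h hzero
    rw [hDdef] at hzero
    simp only [sub_eq_zero] at hzero
    rw [phi_inj e _ _ (hq2 (i+1) (by omega)) (hq2 i (by omega))] at hzero
    exact hq1 i h hzero.symm
  set ε : ZMod 3 := D 0 * signVal (sfun C x 0) with hεdef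
  have hε : ε ≠ 0 := mul_ne_zero (hD_ne 0 (by omega)) (sign_ne_zero _)
  have hmain : ∀ i, i + 1 < k → D i = ε * signVal (sfun C x i) := by
    intro i
    induction i with
    | zero =>
      intro h
      rw [hεdef, mul_assoc, sign_sq, mul_one]
    | succ i ih =>
      intro h
      have ih' := ih (by omega)
      have hrel : (D i + D (i+1) = 0) ↔
          (signVal (sfun C x (i+1)) = - signVal (sfun C x i)) := by
        have hsum : D i + D (i+1)
            = phi e (col (fan C.T x (i+2))) - phi e (col (fan C.T x i)) := by
          rw [hDdef]; ring
        rw [hsum, sub_eq_zero,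
          phi_inj e _ _ (hq2 (i+2) (by omega)) (hq2 i (by omega)),
          ← sign_ne_iff]
        constructor
        · intro hh; exact (hq3 i (by omega)).mp hh.symm
        · intro hh; exact ((hq3 i (by omega)).mpr hh).symm
      exact zmod3_step ε _ _ _ hε (sign_cases _) (sign_cases _)
        (hD_ne (i+1) h) (by rw [← ih']; exact hrel)
  have htel : ∑ i ∈ Finset.range (k-1), D i
      = phi e (col (fan C.T x (k-1))) - phi e (col (fan C.T x 0)) := by
    exact Finset.sum_range_sub (f := fun i => phi e (col (fan C.T x i))) (n := k-1)
  have hsum2 : ∑ i ∈ Finset.range (k-1), D i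
      = ε * ∑ i ∈ Finset.range (k-1), signVal (sfun C x i) := by
    rw [Finset.mul_sum]
    apply Finset.sum_congr rfl
    intro i hi
    simp only [Finset.mem_range] at hi
    exact hmain i (by omega)
  rw [weight_eq_fan_sum, ← hkdef]
  have hc0 : col (fan C.T x 0) = col (x + 1) := by rw [fan_zero]
  have hck : col (fan C.T x (k-1)) = col (x - 1) := by
    have h := fan_last (T := C.T) (x := x)
    rw [hkdef, h]
  constructor
  · intro hh
    have h1 : ∑ i ∈ Finset.range (k-1), D i = 0 := by rw [hsum2, hh, mul_zero]
    rw [htel, sub_eq_zero] at h1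
    rw [phi_inj e _ _ (hq2 (k-1) (by omega)) (hq2 0 (by omega))] at h1
    rw [← hc0, ← hck, h1]
  · intro hh
    have h1 : phi e (col (fan C.T x (k-1))) = phi e (col (fan C.T x 0)) := by
      rw [hc0, hck, hh]
    have h2 : ∑ i ∈ Finset.range (k-1), D i = 0 := by
      rw [htel, h1, sub_self]
    rw [hsum2] at h2
    rcases mul_eq_zero.mp h2 with hc | hc
    · exact absurd hc hε
    · exact hc

end Final

/-- A vertex has weight `0` iff its two neighbours along the polygon boundary get
the same colour in the 4-colouring associated to the signed triangulation. -/
theorem weight_zero_iff_boundary_neighbours_same_colour (n : ℕ)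
    (C : ColouredTri (n + 3) 2) (col : Fin (n + 3) → Fin 4)
    (hcomp : Compatible C col) (x : Fin (n + 3)) :
    weight C x = 0 ↔ col (x - 1) = col (x + 1) := by
  exact weight_zero_iff_aux n C col hcomp x

end PolyFlip
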